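/- Let δ ∈ (0, 1/4) and let ε be a real number with 0 ≤ ε < δ(1 − 2δ). Let p, q ∈ [0, 1] satisfy p·(2q − 1) ≤ ε and (1 − p)·(1 − 2q) ≤ ε. Then: (1) if q ≤ δ then p ≥ 1 − δ; and (2) if q ≥ 1 − δ then p ≤ δ. -/
import Mathlib


/-- Correctness of the NOT-gate gadget in the polymatrix-game reduction for
ε-Nash equilibria: with `q` the input player's probability of 'one' and `p`
the output player's probability of 'one', the ε-Nash constraints force the
output to encode the negation of a pure input bit. -/
theorem polymatrix_ne_not_gadget (δ ε p q : ℝ)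
    (hδ : δ ∈ Set.Ioo (0:ℝ) (1 / 4))
    (hε0 : 0 ≤ ε) (hε1 : ε < δ * (1 - 2 * δ))
    (hp : p ∈ Set.Icc (0:ℝ) 1) (hq : q ∈ Set.Icc (0:ℝ) 1)
    (h1 : p * (2 * q - 1) ≤ ε)
    (h2 : (1 - p) * (1 - 2 * q) ≤ ε) :
    (q ≤ δ → 1 - δ ≤ p) ∧ (1 - δ ≤ q → p ≤ δ) := by
  obtain ⟨hδ0, hδ1⟩ := hδ
  obtain ⟨hp0, hp1⟩ := hp
  obtain ⟨hq0, hq1⟩ := hq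
  constructor
  · intro hqδ
    nlinarith [mul_le_mul_of_nonneg_left hqδ (by linarith : (0:ℝ) ≤ 1 - p)]
  · intro hqδ
    nlinarith [mul_le_mul_of_nonneg_left hqδ (by linarith : (0:ℝ) ≤ p)]
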